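/- Composition in the Kleisli category of the convex-sets-of-multisets monad CM preserves non-empty joins in its second argument: let {f_i : X → Set(M Y)}_{i ∈ I} be a non-empty family of maps whose values f_i(x) are non-empty convex subsets of M Y, and let g : Y → Set(M Z) have non-empty convex values. Then for every x ∈ X, (g·(⋁_i f_i))(x) = convexHull(⋃_{i ∈ I} (g·f_i)(x)), where (⋁_i f_i)(x) := convexHull(⋃_{i ∈ I} f_i(x)). -/

import Mathlib

open scoped NNReal Pointwise

/-- `M Y`: finitely supported functions `Y →₀ ℝ≥0`. -/
abbrev M (Y : Type*) : Type _ := Y →₀ ℝ≥0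

/-- Kleisli composition of the monad `CM`:
`(g·f)(x) = ⋃_{φ ∈ f(x)} ∑_{y ∈ supp(φ)} φ(y) • g(y)`, where the finite sum of sets is the
Minkowski sum (the empty sum being `{0}`). -/
noncomputable def kcompCM {X Y Z : Type*} (g : Y → Set (M Z)) (f : X → Set (M Y)) :
    X → Set (M Z) :=
  fun x => ⋃ φ ∈ f x, ∑ y ∈ φ.support, φ y • g y

/-- Kleisli composition of the monad `CM` preserves non-empty joins in its second
argument: `g·(⋁ᵢ fᵢ) = ⋁ᵢ (g·fᵢ)` pointwise, where `(⋁ᵢ fᵢ)(x) = conv(⋃ᵢ fᵢ(x))`. -/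
lemma convex_add_smul_set {E : Type*} [AddCommMonoid E] [Module ℝ≥0 E] {s : Set E}
    (hs : Convex ℝ≥0 s) (p q : ℝ≥0) : (p + q) • s = p • s + q • s := by
  apply Set.Subset.antisymm
  · rintro _ ⟨u, hu, rfl⟩
    show (p + q) • u ∈ p • s + q • s
    rw [add_smul]
    exact Set.add_mem_add (Set.smul_mem_smul_set hu) (Set.smul_mem_smul_set hu)
  · rintro _ ⟨_, ⟨u, hu, rfl⟩, _, ⟨v, hv, rfl⟩, rfl⟩
    by_cases h : p + q = 0
    · obtain ⟨rfl, rfl⟩ := add_eq_zero.mp h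
      simpa using Set.smul_mem_smul_set (a := (0:ℝ≥0)) hu
    · have hmem : (p / (p + q)) • u + (q / (p + q)) • v ∈ s :=
        hs hu hv zero_le zero_le (by rw [← add_div, div_self h])
      refine ⟨_, hmem, ?_⟩
      show (p + q) • _ = p • u + q • v
      rw [smul_add, smul_smul, smul_smul, mul_div_cancel₀ _ h, mul_div_cancel₀ _ h]

lemma T_extend {Y Z : Type*} (g : Y → Set (M Z)) (hg : ∀ y, (g y).Nonempty) (φ : M Y)
    {s : Finset Y} (hs : φ.support ⊆ s) :
    ∑ y ∈ φ.support, φ y • g y = ∑ y ∈ s, φ y • g y := by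
  apply Finset.sum_subset hs
  intro y _ hy
  rw [Finsupp.notMem_support_iff.mp hy, Set.zero_smul_set (hg y)]

lemma T_combo {Y Z : Type*} (g : Y → Set (M Z)) (hg : ∀ y, (g y).Nonempty ∧ Convex ℝ≥0 (g y))
    (φ ψ : M Y) (a b : ℝ≥0) :
    ∑ y ∈ (a • φ + b • ψ).support, (a • φ + b • ψ) y • g y
      = a • ∑ y ∈ φ.support, φ y • g y + b • ∑ y ∈ ψ.support, ψ y • g y := by
  classical
  set s : Finset Y := φ.support ∪ ψ.support with hs
  have h1 : (a • φ + b • ψ).support ⊆ s :=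
    (Finsupp.support_add).trans (Finset.union_subset_union
      Finsupp.support_smul Finsupp.support_smul)
  rw [T_extend g (fun y => (hg y).1) _ h1,
      T_extend g (fun y => (hg y).1) φ (Finset.subset_union_left),
      T_extend g (fun y => (hg y).1) ψ (Finset.subset_union_right),
      Finset.smul_sum, Finset.smul_sum, ← Finset.sum_add_distrib]
  refine Finset.sum_congr rfl fun y _ => ?_
  have happ : (a • φ + b • ψ) y = a * φ y + b * ψ y := by
    simp [Finsupp.smul_apply]
  rw [happ, convex_add_smul_set (hg y).2, smul_smul, smul_smul]

theorem kcompCM_preserves_nonempty_joins {X Y Z ι : Type*} [Nonempty ι]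
    (f : ι → X → Set (M Y))
    (hf : ∀ i x, (f i x).Nonempty ∧ Convex ℝ≥0 (f i x))
    (g : Y → Set (M Z))
    (hg : ∀ y, (g y).Nonempty ∧ Convex ℝ≥0 (g y)) :
    ∀ x, kcompCM g (fun x' => convexHull ℝ≥0 (⋃ i, f i x')) x
        = convexHull ℝ≥0 (⋃ i, kcompCM g (f i) x) := by
  intro x
  set T : M Y → Set (M Z) := fun φ => ∑ y ∈ φ.support, φ y • g y with hT
  set S : Set (M Y) := ⋃ i, f i x with hS
  set D : Set (M Z) := convexHull ℝ≥0 (⋃ i, kcompCM g (f i) x) with hD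
  have hL : kcompCM g (fun x' => convexHull ℝ≥0 (⋃ i, f i x')) x
      = ⋃ φ ∈ convexHull ℝ≥0 S, T φ := rfl
  rw [hL]
  apply Set.Subset.antisymm
  · refine Set.iUnion₂_subset fun φ hφ => ?_
    have key : convexHull ℝ≥0 S ⊆ {φ | T φ ⊆ D} := by
      apply convexHull_min
      · rintro φ' hφ'
        obtain ⟨i, hi⟩ := Set.mem_iUnion.mp hφ'
        show T φ' ⊆ D
        have h1 : T φ' ⊆ kcompCM g (f i) x := Set.subset_iUnion₂ (s := fun φ _ => T φ) φ' hi
        exact h1.trans ((Set.subset_iUnion (fun i => kcompCM g (f i) x) i).trans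
          (subset_convexHull _ _))
      · rintro φ' hφ' ψ' hψ' a b _ _ hab
        show ∑ y ∈ (a • φ' + b • ψ').support, (a • φ' + b • ψ') y • g y ⊆ D
        rw [T_combo g hg]
        rintro _ ⟨_, ⟨u, hu, rfl⟩, _, ⟨v, hv, rfl⟩, rfl⟩
        exact (convex_convexHull ℝ≥0 _) (hφ' hu) (hψ' hv) zero_le zero_le hab
    exact key hφ
  · apply convexHull_min
    · refine Set.iUnion_subset fun i => ?_
      refine Set.iUnion₂_subset fun φ hφ => ?_
      exact Set.subset_iUnion₂ (s := fun φ _ => T φ) φ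
        (subset_convexHull ℝ≥0 S (Set.mem_iUnion.mpr ⟨i, hφ⟩))
    · rintro ξ hξ η hη a b _ _ hab
      obtain ⟨φ, hφ, hξ'⟩ := Set.mem_iUnion₂.mp hξ
      obtain ⟨ψ, hψ, hη'⟩ := Set.mem_iUnion₂.mp hη
      refine Set.mem_iUnion₂.mpr ⟨a • φ + b • ψ,
        (convex_convexHull ℝ≥0 S) hφ hψ zero_le zero_le hab, ?_⟩
      show a • ξ + b • η ∈ ∑ y ∈ (a • φ + b • ψ).support, (a • φ + b • ψ) y • g y
      rw [T_combo g hg]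
      exact Set.add_mem_add (Set.smul_mem_smul_set hξ') (Set.smul_mem_smul_set hη')
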